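/- Let W ∈ ℝ^{m×m} be symmetric, and suppose U_ℓ = Q Σ Rᵀ with Q ∈ ℝ^{m×k}, Qᵀ W Q = I_k, Σ ∈ ℝ^{k×k}, R ∈ ℝ^{ℓ×k}, Rᵀ R = I_k. Let u ∈ ℝ^m, e = u − Q Qᵀ W u, p = (eᵀ W e)^{1/2} > 0, ẽ = e/p, and let Y = [[Σ, Qᵀ W u],[0, p]] ∈ ℝ^{(k+1)×(k+1)}. Suppose Y = Q_Y Σ_Y R_Yᵀ is a full SVD of Y, i.e. Q_Y, R_Y ∈ ℝ^{(k+1)×(k+1)} with Q_Yᵀ Q_Y = I_{k+1} and R_Yᵀ R_Y = I_{k+1}, and Σ_Y diagonal with nonnegative entries. Then [U_ℓ | u] = ([Q | ẽ] Q_Y) Σ_Y ([[R,0],[0,1]] R_Y)ᵀ, the left factor satisfies ([Q | ẽ] Q_Y)ᵀ W ([Q | ẽ] Q_Y) = I_{k+1}, and the right factor satisfies ([[R,0],[0,1]] R_Y)ᵀ ([[R,0],[0,1]] R_Y) = I_{k+1}. -/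

import Mathlib

open Matrix

noncomputable section

/-- `[A | b]`: the matrix obtained by appending the column `b` to the matrix `A`. -/
def appendCol {m n : Type*} (A : Matrix m n ℝ) (b : m → ℝ) :
    Matrix m (n ⊕ Fin 1) ℝ :=
  Matrix.of fun i => Sum.elim (A i) fun _ => b i

lemma appendCol_eq_fromColumns {m n : Type*} (A : Matrix m n ℝ) (b : m → ℝ) :
    appendCol A b = fromCols A (Matrix.replicateCol (Fin 1) b) := rfl

theorem stmt1 {m ℓ k : ℕ}
    (W : Matrix (Fin m) (Fin m) ℝ) (hW : W.IsSymm)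
    (U : Matrix (Fin m) (Fin ℓ) ℝ)
    (Q : Matrix (Fin m) (Fin k) ℝ)
    (S : Matrix (Fin k) (Fin k) ℝ)
    (R : Matrix (Fin ℓ) (Fin k) ℝ)
    (hU : U = Q * S * Rᵀ)
    (hQ : Qᵀ * W * Q = 1) (hR : Rᵀ * R = 1)
    (u e : Fin m → ℝ)
    (he : e = u - Q *ᵥ (Qᵀ *ᵥ (W *ᵥ u)))
    (p : ℝ) (hp : p = Real.sqrt (e ⬝ᵥ (W *ᵥ e))) (hppos : 0 < p)
    (etil : Fin m → ℝ) (hetil : etil = p⁻¹ • e)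
    (QY RY : Matrix (Fin k ⊕ Fin 1) (Fin k ⊕ Fin 1) ℝ)
    (μ : Fin k ⊕ Fin 1 → ℝ)
    (hQY : QYᵀ * QY = 1) (hRY : RYᵀ * RY = 1) (hμ : ∀ i, 0 ≤ μ i)
    (hSVD : fromBlocks S (Matrix.of fun i (_ : Fin 1) => (Qᵀ *ᵥ (W *ᵥ u)) i) 0
        (Matrix.of fun (_ : Fin 1) (_ : Fin 1) => p) = QY * diagonal μ * RYᵀ) :
    appendCol U u =
      (appendCol Q etil * QY) * diagonal μ *
        ((fromBlocks R 0 0 1 : Matrix (Fin ℓ ⊕ Fin 1) (Fin k ⊕ Fin 1) ℝ) * RY)ᵀ ∧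
    (appendCol Q etil * QY)ᵀ * W * (appendCol Q etil * QY) = 1 ∧
    ((fromBlocks R 0 0 1 : Matrix (Fin ℓ ⊕ Fin 1) (Fin k ⊕ Fin 1) ℝ) * RY)ᵀ *
        ((fromBlocks R 0 0 1 : Matrix (Fin ℓ ⊕ Fin 1) (Fin k ⊕ Fin 1) ℝ) * RY) = 1 := by
  have hp0 : p ≠ 0 := ne_of_gt hppos
  -- abbreviations
  set c : Fin k → ℝ := Qᵀ *ᵥ (W *ᵥ u) with hc
  -- the middle block matrix Y
  have hColC : (Matrix.of fun i (_ : Fin 1) => c i) = Matrix.replicateCol (Fin 1) c := rfl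
  have hColP : (Matrix.of fun (_ : Fin 1) (_ : Fin 1) => p)
      = (p • 1 : Matrix (Fin 1) (Fin 1) ℝ) := by
    ext i j
    fin_cases i; fin_cases j
    simp
  -- e ⬝ᵥ W e = p ^ 2
  have hWe_pos : 0 < e ⬝ᵥ (W *ᵥ e) := by
    have := hppos
    rw [hp] at this
    exact Real.sqrt_pos.mp this
  have hpe : e ⬝ᵥ (W *ᵥ e) = p ^ 2 := by
    rw [hp, Real.sq_sqrt hWe_pos.le]
  -- Qᵀ W e = 0
  have hQWe : Qᵀ *ᵥ (W *ᵥ e) = 0 := by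
    have h1 : Qᵀ *ᵥ (W *ᵥ (Q *ᵥ c)) = c := by
      have : Qᵀ *ᵥ (W *ᵥ (Q *ᵥ c)) = (Qᵀ * W * Q) *ᵥ c := by
        simp [Matrix.mulVec_mulVec, Matrix.mul_assoc]
      rw [this, hQ, Matrix.one_mulVec]
    rw [he]
    simp only [Matrix.mulVec_sub, Matrix.mulVec_sub]
    rw [h1, ← hc, sub_self]
  -- Qᵀ W etil = 0
  have hQWet : Qᵀ *ᵥ (W *ᵥ etil) = 0 := by
    rw [hetil]
    simp [Matrix.mulVec_smul, hQWe]
  -- etil ⬝ᵥ W etil = 1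
  have hetWet : etil ⬝ᵥ (W *ᵥ etil) = 1 := by
    rw [hetil]
    simp only [Matrix.mulVec_smul, dotProduct_smul, smul_dotProduct, smul_eq_mul]
    rw [hpe]
    field_simp
  -- the key orthogonality of the appended Q
  have hXWX : (appendCol Q etil)ᵀ * W * (appendCol Q etil) = 1 := by
    rw [appendCol_eq_fromColumns, transpose_fromCols, transpose_replicateCol,
      fromRows_mul, fromRows_mul_fromCols]
    have h11 : Qᵀ * W * Q = 1 := hQ
    have h12 : Qᵀ * W * Matrix.replicateCol (Fin 1) etil = 0 := by
      rw [Matrix.mul_assoc, ← Matrix.replicateCol_mulVec, ← Matrix.replicateCol_mulVec, hQWet, Matrix.replicateCol_zero]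
    have h21 : Matrix.replicateRow (Fin 1) etil * W * Q = 0 := by
      have : (Matrix.replicateRow (Fin 1) etil * W * Q)ᵀ = Qᵀ * Wᵀ * Matrix.replicateCol (Fin 1) etil := by
        simp [Matrix.transpose_mul, Matrix.transpose_replicateRow, Matrix.mul_assoc]
      have h' : (Matrix.replicateRow (Fin 1) etil * W * Q)ᵀ = 0 := by
        rw [this, hW.eq, h12]
      calc Matrix.replicateRow (Fin 1) etil * W * Q = ((Matrix.replicateRow (Fin 1) etil * W * Q)ᵀ)ᵀ := by
            rw [Matrix.transpose_transpose]
        _ = 0 := by rw [h']; simp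
    have h22 : Matrix.replicateRow (Fin 1) etil * W * Matrix.replicateCol (Fin 1) etil = 1 := by
      rw [Matrix.mul_assoc, ← Matrix.replicateCol_mulVec, Matrix.replicateRow_mul_replicateCol]
      ext i j
      fin_cases i; fin_cases j
      simp [hetWet]
    rw [h11, h12, h21, h22, ← fromBlocks_one]
  refine ⟨?_, ?_, ?_⟩
  · -- the factorization
    have hRB : ((fromBlocks R 0 0 1 : Matrix (Fin ℓ ⊕ Fin 1) (Fin k ⊕ Fin 1) ℝ) * RY)ᵀ
        = RYᵀ * (fromBlocks Rᵀ 0 0 1 : Matrix (Fin k ⊕ Fin 1) (Fin ℓ ⊕ Fin 1) ℝ) := by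
      rw [Matrix.transpose_mul, fromBlocks_transpose]
      simp
    rw [hRB]
    have : appendCol Q etil * QY * diagonal μ * (RYᵀ * (fromBlocks Rᵀ 0 0 1 : Matrix (Fin k ⊕ Fin 1) (Fin ℓ ⊕ Fin 1) ℝ))
        = appendCol Q etil * (QY * diagonal μ * RYᵀ) * (fromBlocks Rᵀ 0 0 1 : Matrix (Fin k ⊕ Fin 1) (Fin ℓ ⊕ Fin 1) ℝ) := by
      simp only [Matrix.mul_assoc]
    rw [this, ← hSVD, hColC, hColP, appendCol_eq_fromColumns Q etil,
      appendCol_eq_fromColumns U u, fromCols_mul_fromBlocks, fromCols_mul_fromBlocks]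
    simp only [Matrix.mul_zero, Matrix.zero_mul, zero_add, Matrix.mul_one, add_zero,
      Matrix.mul_smul, smul_smul]
    rw [hU, Matrix.mul_assoc]
    congr 1
    rw [← Matrix.replicateCol_mulVec, ← Matrix.replicateCol_smul, ← Matrix.replicateCol_add]
    congr 1
    rw [hetil, smul_smul, mul_inv_cancel₀ hp0, one_smul, he]
    funext i
    simp
  · -- left orthogonality
    rw [Matrix.transpose_mul]
    calc QYᵀ * (appendCol Q etil)ᵀ * W * (appendCol Q etil * QY)
        = QYᵀ * ((appendCol Q etil)ᵀ * W * appendCol Q etil) * QY := by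
          simp only [Matrix.mul_assoc]
      _ = 1 := by rw [hXWX, Matrix.mul_one, hQY]
  · -- right orthogonality
    rw [Matrix.transpose_mul, fromBlocks_transpose]
    have hB : (fromBlocks Rᵀ 0ᵀ 0ᵀ (1 : Matrix (Fin 1) (Fin 1) ℝ)ᵀ)
        * (fromBlocks R 0 0 1 : Matrix (Fin ℓ ⊕ Fin 1) (Fin k ⊕ Fin 1) ℝ) = 1 := by
      rw [fromBlocks_multiply]
      simp [hR, ← fromBlocks_one]
    calc RYᵀ * fromBlocks Rᵀ 0ᵀ 0ᵀ (1:Matrix (Fin 1) (Fin 1) ℝ)ᵀ * ((fromBlocks R 0 0 1 : Matrix (Fin ℓ ⊕ Fin 1) (Fin k ⊕ Fin 1) ℝ) * RY)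
        = RYᵀ * (fromBlocks Rᵀ 0ᵀ 0ᵀ (1:Matrix (Fin 1) (Fin 1) ℝ)ᵀ * (fromBlocks R 0 0 1 : Matrix (Fin ℓ ⊕ Fin 1) (Fin k ⊕ Fin 1) ℝ)) * RY := by
          simp only [Matrix.mul_assoc]
      _ = 1 := by rw [hB, Matrix.mul_one, hRY]
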